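/- Let X be a compact metric space, Γ a group acting on X by homeomorphisms, and suppose there exist metrics d_w on X ∖ {a} indexed by points w (visual metrics from a basepoint) satisfying: (i) d_{γw}(γx, γy) = d_w(x,y) for all γ ∈ Γ, and (ii) (1/C)·e^{−εβ_a(w, w')}·d_w(x,y) ≤ d_{w'}(x,y) ≤ C·e^{−εβ_a(w, w')}·d_w(x,y) for a Busemann-type cocycle β_a. If γ_j ∈ Γ satisfy β_a(w, γ_j w) → −∞, then for every pair of distinct points x ≠ y in X ∖ {a}, d_w(x,y)/d_w(γ_j x, γ_j y) → ∞. Consequently γ_j cannot converge uniformly to the identity on any Cantor set K ⊆ X ∖ {a} containing at least two points (unless γ_j = id eventually). -/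

import Mathlib

/-- Visual-metric rigidity on a boundary.  Let a group `Γ` act on a compact metric space `X`
and on a set `W` of basepoints, with metrics `d w` on `X ∖ {a}` satisfying the equivariance
`d (γ•w) (γ•x) (γ•y) = d w x y` and the conformal comparison
`(1/C)·e^{−ε·β w w'}·d w x y ≤ d w' x y ≤ C·e^{−ε·β w w'}·d w x y` for a Busemann-type
cocycle `β`.  If `γ j ∈ Γ` satisfy `β w (γ j • w) → −∞`, then for every pair of distinct
points `x ≠ y` of `X ∖ {a}` (whose images avoid `a`), `d w x y / d w (γ j x) (γ j y) → ∞`;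
consequently the `γ j` cannot converge uniformly (in `d w`) to the identity on any set
`K ⊆ X ∖ {a}` containing two distinct points. -/
theorem visual_metric_no_uniform_convergence_to_identity
    (X : Type*) [MetricSpace X] [CompactSpace X]
    (Γ : Type*) [Group Γ] [MulAction Γ X]
    (hhomeo : ∀ γ : Γ, Continuous fun x : X => γ • x)
    (W : Type*) [MulAction Γ W]
    (a : X) (d : W → X → X → ℝ) (β : W → W → ℝ) (C ε : ℝ)
    (hC : 1 ≤ C) (hε : 0 < ε)
    (hequiv : ∀ (γ : Γ) (w : W) (x y : X), d (γ • w) (γ • x) (γ • y) = d w x y)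
    (hcomp : ∀ (w w' : W) (x y : X), x ≠ a → y ≠ a →
      (1 / C) * Real.exp (-ε * β w w') * d w x y ≤ d w' x y ∧
      d w' x y ≤ C * Real.exp (-ε * β w w') * d w x y)
    (hpos : ∀ (w : W) (x y : X), x ≠ y → x ≠ a → y ≠ a → 0 < d w x y)
    (hsymm : ∀ (w : W) (x y : X), d w x y = d w y x)
    (htri : ∀ (w : W) (x y z : X), x ≠ a → y ≠ a → z ≠ a →
      d w x z ≤ d w x y + d w y z)
    (w : W) (γ : ℕ → Γ)
    (hβ : Filter.Tendsto (fun j => β w (γ j • w)) Filter.atTop Filter.atBot) :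
    (∀ x y : X, x ≠ y → x ≠ a → y ≠ a →
      (∀ j, γ j • x ≠ a ∧ γ j • y ≠ a) →
      Filter.Tendsto (fun j => d w x y / d w (γ j • x) (γ j • y))
        Filter.atTop Filter.atTop) ∧
    ¬ ∃ K : Set X, a ∉ K ∧ (∀ x ∈ K, ∀ j, γ j • x ∈ K) ∧
        (∃ x ∈ K, ∃ y ∈ K, x ≠ y) ∧
        (∀ δ > 0, ∃ N : ℕ, ∀ j ≥ N, ∀ x ∈ K, d w x (γ j • x) ≤ δ) := by
  have hC0 : (0:ℝ) < C := lt_of_lt_of_le one_pos hC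
  have main : ∀ x y : X, x ≠ y → x ≠ a → y ≠ a →
      (∀ j, γ j • x ≠ a ∧ γ j • y ≠ a) →
      Filter.Tendsto (fun j => d w x y / d w (γ j • x) (γ j • y))
        Filter.atTop Filter.atTop := by
    intro x y hxy hxa hya hja
    -- lower bound function
    have hg : Filter.Tendsto (fun j => (1 / C) * Real.exp (-ε * β w (γ j • w)))
        Filter.atTop Filter.atTop := by
      apply Filter.Tendsto.const_mul_atTop (by positivity : (0:ℝ) < 1 / C)
      apply Real.tendsto_exp_atTop.comp
      have hneg : Filter.Tendsto (fun j => -(β w (γ j • w))) Filter.atTop Filter.atTop :=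
        Filter.tendsto_neg_atTop_iff.mpr hβ
      have := Filter.Tendsto.const_mul_atTop hε hneg
      simpa [neg_mul, mul_neg, mul_comm] using this
    apply Filter.tendsto_atTop_mono _ hg
    intro j
    have hxy' : γ j • x ≠ γ j • y := fun h => hxy (MulAction.injective (γ j) h)
    have hdpos : 0 < d w (γ j • x) (γ j • y) :=
      hpos w _ _ hxy' (hja j).1 (hja j).2
    have hco := (hcomp w (γ j • w) (γ j • x) (γ j • y) (hja j).1 (hja j).2).1
    have heq : d (γ j • w) (γ j • x) (γ j • y) = d w x y := hequiv (γ j) w x y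
    rw [heq] at hco
    rw [le_div_iff₀ hdpos]
    exact hco
  refine ⟨main, ?_⟩
  rintro ⟨K, haK, hinv, ⟨x, hx, y, hy, hxy⟩, hunif⟩
  have hxa : x ≠ a := fun h => haK (h ▸ hx)
  have hya : y ≠ a := fun h => haK (h ▸ hy)
  have hja : ∀ j, γ j • x ≠ a ∧ γ j • y ≠ a :=
    fun j => ⟨fun h => haK (h ▸ hinv x hx j), fun h => haK (h ▸ hinv y hy j)⟩
  have htend := main x y hxy hxa hya hja
  set D := d w x y with hD
  have hD0 : 0 < D := hpos w x y hxy hxa hya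
  obtain ⟨N, hN⟩ := hunif (D / 4) (by positivity)
  obtain ⟨N', hN'⟩ := (Filter.tendsto_atTop.mp htend 3).exists_forall_of_atTop
  -- pick j large
  set j := max N N' with hj
  have hjN : j ≥ N := le_max_left _ _
  have hjN' : j ≥ N' := le_max_right _ _
  have h1 : d w x (γ j • x) ≤ D / 4 := hN j hjN x hx
  have h2 : d w y (γ j • y) ≤ D / 4 := hN j hjN y hy
  -- triangle: D ≤ d x γx + d γx γy + d γy y
  have ht1 : D ≤ d w x (γ j • x) + d w (γ j • x) y :=
    htri w x (γ j • x) y hxa (hja j).1 hya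
  have ht2 : d w (γ j • x) y ≤ d w (γ j • x) (γ j • y) + d w (γ j • y) y :=
    htri w (γ j • x) (γ j • y) y (hja j).1 (hja j).2 hya
  have hsy : d w (γ j • y) y = d w y (γ j • y) := hsymm w _ _
  have hlow : D / 2 ≤ d w (γ j • x) (γ j • y) := by
    rw [hsy] at ht2; linarith
  have hratio : D / d w (γ j • x) (γ j • y) ≤ 2 := by
    calc D / d w (γ j • x) (γ j • y) ≤ D / (D / 2) :=
          div_le_div_of_nonneg_left hD0.le (by positivity) hlow
      _ = 2 := by field_simp
  have := hN' j hjN'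
  linarith
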